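/- Let I be a homogeneous ideal of R generated by homogeneous f_1,…,f_m, and let G ⊇ {f_1,…,f_m} be a finite set of homogeneous polynomials contained in I. If for every pair p, q ∈ G with deg(S(p,q)) ≤ d, the S-polynomial S(p,q) has a standard representation with respect to G, then for every homogeneous h ∈ I with deg(h) ≤ d, the leading monomial lm(h) is divisible by lm(g) for some g ∈ G (i.e., G is a d-Gröbner basis of I). -/

import Mathlib

open scoped MonomialOrder

namespace F5

variable {σ K : Type*} [Field K] (mo : MonomialOrder σ)

/-- leading monomial (exponent) of a polynomial w.r.t. a monomial order -/
noncomputable def lm (p : MvPolynomial σ K) : σ →₀ ℕ :=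
  mo.toSyn.symm (p.support.sup fun d => mo.toSyn d)

/-- leading coefficient -/
noncomputable def lc (p : MvPolynomial σ K) : K := p.coeff (lm mo p)

/-- S-polynomial -/
noncomputable def Spoly (p q : MvPolynomial σ K) : MvPolynomial σ K :=
  MvPolynomial.monomial ((lm mo p ⊔ lm mo q) - lm mo p) (lc mo q) * p -
    MvPolynomial.monomial ((lm mo p ⊔ lm mo q) - lm mo q) (lc mo p) * q

/-- standard representation of `p` w.r.t. the finite set `G` -/
def HasStdRep (G : Finset (MvPolynomial σ K)) (p : MvPolynomial σ K) : Prop :=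
  p = 0 ∨ ∃ lam : MvPolynomial σ K → MvPolynomial σ K,
    p = ∑ g ∈ G, lam g * g ∧
    ∀ g ∈ G, lam g * g ≠ 0 → lm mo (lam g * g) ≼[mo] lm mo p


open MvPolynomial
set_option maxHeartbeats 1000000

lemma toSyn_lm (p : MvPolynomial σ K) :
    mo.toSyn (lm mo p) = p.support.sup fun d => mo.toSyn d := by
  simp [lm]

lemma le_lm {p : MvPolynomial σ K} {b : σ →₀ ℕ} (hb : b ∈ p.support) :
    b ≼[mo] lm mo p := by
  rw [toSyn_lm]; exact Finset.le_sup hb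

lemma lm_mem {p : MvPolynomial σ K} (hp : p ≠ 0) : lm mo p ∈ p.support := by
  obtain ⟨b, hb, he⟩ := Finset.exists_mem_eq_sup p.support
    (Finset.nonempty_of_ne_empty (by rwa [Ne, MvPolynomial.support_eq_empty])) (fun d => mo.toSyn d)
  have : lm mo p = b := by rw [lm, he, AddEquiv.symm_apply_apply]
  rw [this]; exact hb

@[simp] lemma lm_zero : lm mo (0 : MvPolynomial σ K) = 0 := by
  simp [lm]

lemma coeff_eq_zero_of_lm_lt {p : MvPolynomial σ K} {b : σ →₀ ℕ}
    (h : lm mo p ≺[mo] b) : p.coeff b = 0 := by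
  by_contra hc
  exact absurd (le_lm mo (MvPolynomial.mem_support_iff.mpr hc)) (not_le.mpr h)

lemma lc_ne_zero {p : MvPolynomial σ K} (hp : p ≠ 0) : lc mo p ≠ 0 :=
  MvPolynomial.mem_support_iff.mp (lm_mem mo hp)

lemma coeff_mul_lm_add_lm (p q : MvPolynomial σ K) :
    MvPolynomial.coeff (lm mo p + lm mo q) (p * q) = lc mo p * lc mo q := by
  classical
  rw [MvPolynomial.coeff_mul]
  apply Finset.sum_eq_single_of_mem (lm mo p, lm mo q) (Finset.HasAntidiagonal.mem_antidiagonal.mpr rfl)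
  · rintro ⟨u, v⟩ huv hne
    rw [Finset.HasAntidiagonal.mem_antidiagonal] at huv
    by_cases hu : p.coeff u = 0
    · rw [hu, zero_mul]
    by_cases hv : q.coeff v = 0
    · rw [hv, mul_zero]
    have h1 : u ≼[mo] lm mo p := le_lm mo (MvPolynomial.mem_support_iff.mpr hu)
    have h2 : v ≼[mo] lm mo q := le_lm mo (MvPolynomial.mem_support_iff.mpr hv)
    have hsum : mo.toSyn u + mo.toSyn v = mo.toSyn (lm mo p) + mo.toSyn (lm mo q) := by
      rw [← map_add, ← map_add, huv]
    have hu' : mo.toSyn u = mo.toSyn (lm mo p) := by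
      rcases h1.lt_or_eq with hlt | he
      · exfalso
        have h3 : mo.toSyn u + mo.toSyn v < mo.toSyn (lm mo p) + mo.toSyn (lm mo q) :=
          add_lt_add_of_lt_of_le hlt h2
        rw [hsum] at h3; exact lt_irrefl _ h3
      · exact he
    have hv' : mo.toSyn v = mo.toSyn (lm mo q) := by
      have h4 := hsum; rw [hu'] at h4; exact add_left_cancel h4
    exact absurd (Prod.ext (mo.toSyn.injective hu') (mo.toSyn.injective hv')) hne

lemma lm_mul {p q : MvPolynomial σ K} (hp : p ≠ 0) (hq : q ≠ 0) :
    lm mo (p * q) = lm mo p + lm mo q := by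
  classical
  apply mo.toSyn.injective
  apply le_antisymm
  · rw [toSyn_lm, map_add]
    apply Finset.sup_le
    intro w hw
    have := MvPolynomial.support_mul p q hw
    rw [Finset.mem_add] at this
    obtain ⟨u, hu, v, hv, rfl⟩ := this
    rw [map_add]
    exact add_le_add (le_lm mo hu) (le_lm mo hv)
  · apply le_lm
    rw [MvPolynomial.mem_support_iff, coeff_mul_lm_add_lm mo]
    exact mul_ne_zero (lc_ne_zero mo hp) (lc_ne_zero mo hq)

lemma lc_mul {p q : MvPolynomial σ K} (hp : p ≠ 0) (hq : q ≠ 0) :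
    lc mo (p * q) = lc mo p * lc mo q := by
  rw [lc, lm_mul mo hp hq, coeff_mul_lm_add_lm]

lemma lm_monomial {a : σ →₀ ℕ} {c : K} (hc : c ≠ 0) :
    lm mo (monomial a c) = a := by
  classical
  apply mo.toSyn.injective
  rw [toSyn_lm, MvPolynomial.support_monomial, if_neg hc, Finset.sup_singleton]

lemma lm_add_le (p q : MvPolynomial σ K) :
    mo.toSyn (lm mo (p + q)) ≤ max (mo.toSyn (lm mo p)) (mo.toSyn (lm mo q)) := by
  classical
  rw [toSyn_lm]
  apply Finset.sup_le
  intro w hw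
  rcases Finset.mem_union.mp (MvPolynomial.support_add hw) with h | h
  · exact le_max_of_le_left (le_lm mo h)
  · exact le_max_of_le_right (le_lm mo h)

lemma lm_tail {p : MvPolynomial σ K} (hp : p ≠ 0) :
    p - monomial (lm mo p) (lc mo p) = 0 ∨
      (lm mo (p - monomial (lm mo p) (lc mo p)) ≺[mo] lm mo p) := by
  classical
  by_cases h0 : p - monomial (lm mo p) (lc mo p) = 0
  · exact Or.inl h0
  right
  have hbot : (⊥ : mo.syn) < mo.toSyn (lm mo p) := by
    rcases (bot_le : (⊥ : mo.syn) ≤ mo.toSyn (lm mo p)).lt_or_eq with hb | hb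
    · exact hb
    exfalso
    apply h0
    have hlm0 : lm mo p = 0 := by
      apply mo.toSyn.injective
      rw [map_zero, ← MonomialOrder.bot_eq_zero, ← hb]
    have hsupp : ∀ w ∈ p.support, w = 0 := by
      intro w hw
      have h1 := le_lm mo hw
      rw [hlm0, map_zero, ← MonomialOrder.bot_eq_zero] at h1
      have h2 : mo.toSyn w = 0 := le_antisymm h1 bot_le
      apply mo.toSyn.injective
      rw [h2, map_zero]
    have hp' : p = monomial 0 (MvPolynomial.coeff 0 p) := by
      ext w
      rcases eq_or_ne w 0 with rfl | hne
      · simp [MvPolynomial.coeff_monomial]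
      · rw [MvPolynomial.coeff_monomial, if_neg (fun hh => hne hh.symm)]
        by_contra hc
        exact hne (hsupp w (MvPolynomial.mem_support_iff.mpr hc))
    rw [hlm0, lc, hlm0]
    nth_rewrite 1 [hp']
    simp
  rw [toSyn_lm]
  rw [Finset.sup_lt_iff hbot]
  intro w hw
  rw [MvPolynomial.mem_support_iff, MvPolynomial.coeff_sub,
    MvPolynomial.coeff_monomial] at hw
  rcases eq_or_ne w (lm mo p) with rfl | hne
  · simp [lc] at hw
  · apply lt_of_le_of_ne
    · apply le_lm
      rw [if_neg (fun h => hne h.symm), sub_zero] at hw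
      exact MvPolynomial.mem_support_iff.mpr hw
    · exact fun h => hne (mo.toSyn.injective h)

lemma degree_le_of_syn_le {σ' : Type*} (mo' : MonomialOrder σ')
    (hdeg : ∀ a b : σ' →₀ ℕ, Finsupp.degree a < Finsupp.degree b → (a ≺[mo'] b))
    {a b : σ' →₀ ℕ} (h : a ≼[mo'] b) : Finsupp.degree a ≤ Finsupp.degree b := by
  by_contra hc
  exact absurd (hdeg b a (lt_of_not_ge hc)) (not_lt.mpr h)

lemma degree_add' (a b : σ →₀ ℕ) :
    Finsupp.degree (a + b) = Finsupp.degree a + Finsupp.degree b := by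
  simp [Finsupp.degree_eq_weight_one, map_add]

lemma degree_mono {a b : σ →₀ ℕ} (h : a ≤ b) :
    Finsupp.degree a ≤ Finsupp.degree b := by
  have h2 : a + (b - a) = b := add_tsub_cancel_of_le h
  rw [← h2, degree_add']
  exact le_self_add

lemma isHomogeneous_degree_eq {p : MvPolynomial σ K} {e : ℕ} (hp : p.IsHomogeneous e)
    {w : σ →₀ ℕ} (hw : w ∈ p.support) : Finsupp.degree w = e := by
  rw [Finsupp.degree_eq_weight_one]
  exact hp (MvPolynomial.mem_support_iff.mp hw)

lemma stdrep_bound {G : Finset (MvPolynomial σ K)} {S : MvPolynomial σ K}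
    (h : HasStdRep mo G S) :
    S = 0 ∨ ∃ lam : MvPolynomial σ K → MvPolynomial σ K,
      S = ∑ g ∈ G, lam g * g ∧
      ∀ g ∈ G, lam g * g ≠ 0 → lm mo (lam g * g) ≼[mo] lm mo S := h

lemma lm_Spoly_lt {p q : MvPolynomial σ K} (hp : p ≠ 0) (hq : q ≠ 0)
    (hS : Spoly mo p q ≠ 0) :
    mo.toSyn (lm mo (Spoly mo p q)) < mo.toSyn (lm mo p ⊔ lm mo q) := by
  classical
  set γ := lm mo p ⊔ lm mo q with hγ
  set A := MvPolynomial.monomial (γ - lm mo p) (lc mo q) * p with hA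
  set B := MvPolynomial.monomial (γ - lm mo q) (lc mo p) * q with hB
  have hAne : A ≠ 0 := by
    rw [hA]
    exact mul_ne_zero (fun hz => lc_ne_zero mo hq (by
      simpa using (MvPolynomial.monomial_eq_zero).mp hz)) hp
  have hBne : B ≠ 0 := by
    rw [hB]
    exact mul_ne_zero (fun hz => lc_ne_zero mo hp (by
      simpa using (MvPolynomial.monomial_eq_zero).mp hz)) hq
  have hlmA : lm mo A = γ := by
    rw [hA, lm_mul mo (fun hz => lc_ne_zero mo hq (by
        simpa using (MvPolynomial.monomial_eq_zero).mp hz)) hp,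
      lm_monomial mo (lc_ne_zero mo hq), tsub_add_cancel_of_le le_sup_left]
  have hlmB : lm mo B = γ := by
    rw [hB, lm_mul mo (fun hz => lc_ne_zero mo hp (by
        simpa using (MvPolynomial.monomial_eq_zero).mp hz)) hq,
      lm_monomial mo (lc_ne_zero mo hp), tsub_add_cancel_of_le le_sup_right]
  have hcoeff : MvPolynomial.coeff γ (Spoly mo p q) = 0 := by
    have h1 : MvPolynomial.coeff γ A = lc mo q * lc mo p := by
      rw [hA, MvPolynomial.coeff_monomial_mul', if_pos tsub_le_self,
        tsub_tsub_cancel_of_le le_sup_left]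
      rfl
    have h2 : MvPolynomial.coeff γ B = lc mo p * lc mo q := by
      rw [hB, MvPolynomial.coeff_monomial_mul', if_pos tsub_le_self,
        tsub_tsub_cancel_of_le le_sup_right]
      rfl
    have : Spoly mo p q = A - B := rfl
    rw [this, MvPolynomial.coeff_sub, h1, h2, mul_comm, sub_self]
  have hmem := lm_mem mo hS
  have hbound : mo.toSyn (lm mo (Spoly mo p q)) ≤ mo.toSyn γ := by
    have hsub : (Spoly mo p q).support ⊆ A.support ∪ B.support := by
      have : Spoly mo p q = A - B := rfl
      rw [this, sub_eq_add_neg]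
      refine (MvPolynomial.support_add).trans ?_
      rw [MvPolynomial.support_neg]
    rcases Finset.mem_union.mp (hsub hmem) with hw | hw
    · rw [← hlmA]; exact le_lm mo hw
    · rw [← hlmB]; exact le_lm mo hw
  apply lt_of_le_of_ne hbound
  intro heq
  have : lm mo (Spoly mo p q) = γ := mo.toSyn.injective heq
  rw [← this] at hcoeff
  exact (MvPolynomial.mem_support_iff.mp hmem) hcoeff

lemma homComp_mul_right {g : MvPolynomial σ K} {b : ℕ} (hg : g.IsHomogeneous b)
    (p : MvPolynomial σ K) (a : ℕ) :
    homogeneousComponent a (p * g) =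
      if b ≤ a then homogeneousComponent (a - b) p * g else 0 := by
  classical
  by_cases hba : b ≤ a
  · rw [if_pos hba]
    ext u
    rw [coeff_homogeneousComponent, MvPolynomial.coeff_mul, MvPolynomial.coeff_mul]
    split_ifs with hu
    · apply Finset.sum_congr rfl
      rintro ⟨i, j⟩ hij
      rw [Finset.HasAntidiagonal.mem_antidiagonal] at hij
      rw [coeff_homogeneousComponent]
      by_cases hj : MvPolynomial.coeff j g = 0
      · rw [hj, mul_zero, mul_zero]
      have hjb : Finsupp.degree j = b := by
        rw [Finsupp.degree_eq_weight_one]; exact hg hj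
      have hdi : Finsupp.degree i = a - b := by
        have h1 : Finsupp.degree i + b = a := by
          rw [← hjb, ← degree_add', hij, hu]
        omega
      rw [if_pos hdi]
    · symm
      apply Finset.sum_eq_zero
      rintro ⟨i, j⟩ hij
      rw [Finset.HasAntidiagonal.mem_antidiagonal] at hij
      rw [coeff_homogeneousComponent]
      by_cases hj : MvPolynomial.coeff j g = 0
      · rw [hj, mul_zero]
      have hjb : Finsupp.degree j = b := by
        rw [Finsupp.degree_eq_weight_one]; exact hg hj
      split_ifs with hdi
      · exfalso
        apply hu
        rw [← hij, degree_add', hdi, hjb]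
        omega
      · rw [zero_mul]
  · rw [if_neg hba]
    ext u
    rw [coeff_homogeneousComponent, MvPolynomial.coeff_zero]
    split_ifs with hu
    · rw [MvPolynomial.coeff_mul]
      apply Finset.sum_eq_zero
      rintro ⟨i, j⟩ hij
      rw [Finset.HasAntidiagonal.mem_antidiagonal] at hij
      by_cases hj : MvPolynomial.coeff j g = 0
      · rw [hj, mul_zero]
      have hjb : Finsupp.degree j = b := by
        rw [Finsupp.degree_eq_weight_one]; exact hg hj
      exfalso
      apply hba
      calc b = Finsupp.degree j := hjb.symm
      _ ≤ Finsupp.degree u := by rw [← hij, degree_add']; exact le_add_self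
      _ = a := hu
    · rfl

lemma lm_sum_lt {s : Finset (MvPolynomial σ K)} {F : MvPolynomial σ K → MvPolynomial σ K}
    {δ : mo.syn} (hδ : 0 < δ) (hb : ∀ g ∈ s, mo.toSyn (lm mo (F g)) < δ) :
    mo.toSyn (lm mo (∑ g ∈ s, F g)) < δ := by
  classical
  induction s using Finset.induction_on with
  | empty => simpa using hδ
  | @insert p s hps ih =>
    rw [Finset.sum_insert hps]
    apply lt_of_le_of_lt (lm_add_le mo _ _)
    apply max_lt (hb _ (Finset.mem_insert_self _ _))
    exact ih fun g hg => hb g (Finset.mem_insert_of_mem hg)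

lemma syzygy_step (G : Finset (MvPolynomial σ K)) (d : ℕ)
    (hspol : ∀ p ∈ G, ∀ q ∈ G,
      Finsupp.degree (lm mo p ⊔ lm mo q) ≤ d → HasStdRep mo G (Spoly mo p q))
    (T : Finset (MvPolynomial σ K)) (hTG : T ⊆ G) (m : σ →₀ ℕ)
    (hmd : Finsupp.degree m ≤ d) (c : MvPolynomial σ K → K)
    (hgT : ∀ g ∈ T, g ≠ 0 ∧ lm mo g ≤ m)
    (hcs : ∑ g ∈ T, c g * lc mo g = 0) :
    ∃ μ : MvPolynomial σ K → MvPolynomial σ K,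
      (∑ g ∈ T, (MvPolynomial.monomial (m - lm mo g) (c g)) * g) = ∑ g ∈ G, μ g * g ∧
      ∀ g ∈ G, μ g * g ≠ 0 → mo.toSyn (lm mo (μ g * g)) < mo.toSyn m := by
  classical
  induction T using Finset.induction_on generalizing c with
  | empty => exact ⟨0, by simp, by simp⟩
  | @insert p T hpT ih =>
    have hTG' : T ⊆ G := (Finset.subset_insert p T).trans hTG
    have hpG : p ∈ G := hTG (Finset.mem_insert_self p T)
    have hp0 : p ≠ 0 := (hgT p (Finset.mem_insert_self p T)).1
    have hpm : lm mo p ≤ m := (hgT p (Finset.mem_insert_self p T)).2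
    rw [Finset.sum_insert hpT] at hcs
    rcases T.eq_empty_or_nonempty with rfl | ⟨q, hqT⟩
    · -- single element: c p * lc p = 0, so c p = 0
      rw [Finset.sum_empty, add_zero] at hcs
      have hcp : c p = 0 := by
        rcases mul_eq_zero.mp hcs with h | h
        · exact h
        · exact absurd h (lc_ne_zero mo hp0)
      refine ⟨0, ?_, by simp⟩
      rw [Finset.sum_insert hpT, Finset.sum_empty, hcp]
      simp
    · have hq0 : q ≠ 0 := (hgT q (Finset.mem_insert_of_mem hqT)).1
      have hqm : lm mo q ≤ m := (hgT q (Finset.mem_insert_of_mem hqT)).2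
      have hqG : q ∈ G := hTG' hqT
      have hlcq : lc mo q ≠ 0 := lc_ne_zero mo hq0
      set γ : σ →₀ ℕ := lm mo p ⊔ lm mo q with hγ
      have hγm : γ ≤ m := sup_le hpm hqm
      have hγd : Finsupp.degree γ ≤ d := le_trans (degree_mono hγm) hmd
      -- new coefficients
      set e : K := c p * (lc mo q)⁻¹ with he
      set c' : MvPolynomial σ K → K :=
        fun g => if g = q then c q + c p * lc mo p * (lc mo q)⁻¹ else c g with hc'
      have hcq : c' q = c q + c p * lc mo p * (lc mo q)⁻¹ := by simp [hc']
      have hcne : ∀ g, g ≠ q → c' g = c g := by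
        intro g hg; simp [hc', hg]
      have hcs' : ∑ g ∈ T, c' g * lc mo g = 0 := by
        rw [← Finset.add_sum_erase T _ hqT]
        have h1 : ∀ g ∈ T.erase q, c' g * lc mo g = c g * lc mo g := by
          intro g hg
          rw [hcne g (Finset.ne_of_mem_erase hg)]
        rw [Finset.sum_congr rfl h1, hcq]
        have h2 : c q * lc mo q + ∑ g ∈ T.erase q, c g * lc mo g
            = ∑ g ∈ T, c g * lc mo g :=
          Finset.add_sum_erase T (fun g => c g * lc mo g) hqT
        have h3 : (c q + c p * lc mo p * (lc mo q)⁻¹) * lc mo q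
            = c q * lc mo q + c p * lc mo p := by
          rw [add_mul, mul_assoc, inv_mul_cancel₀ hlcq, mul_one]
        rw [h3]
        linear_combination h2 + hcs
      obtain ⟨μ', hμ'sum, hμ'b⟩ := ih hTG' c'
        (fun g hg => hgT g (Finset.mem_insert_of_mem hg)) hcs'
      -- the key telescoping identity
      have he1 : e * lc mo q = c p := by
        rw [he, mul_assoc, inv_mul_cancel₀ hlcq, mul_one]
      have hkey : (MvPolynomial.monomial (m - lm mo p) (c p)) * p =
          MvPolynomial.monomial (m - γ) e * Spoly mo p q +
          MvPolynomial.monomial (m - lm mo q) (c p * lc mo p * (lc mo q)⁻¹) * q := by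
        rw [Spoly]
        rw [mul_sub, ← mul_assoc, ← mul_assoc, MvPolynomial.monomial_mul,
          MvPolynomial.monomial_mul,
          tsub_add_tsub_cancel hγm le_sup_left, tsub_add_tsub_cancel hγm le_sup_right]
        have he2 : e * lc mo p = c p * lc mo p * (lc mo q)⁻¹ := by
          rw [he]; ring
        rw [he1, he2]
        ring
      -- rewriting the total sum
      have hsplit : ∑ g ∈ insert p T, (MvPolynomial.monomial (m - lm mo g) (c g)) * g =
          MvPolynomial.monomial (m - γ) e * Spoly mo p q +
          ∑ g ∈ T, (MvPolynomial.monomial (m - lm mo g) (c' g)) * g := by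
        rw [Finset.sum_insert hpT, hkey]
        have h1 : ∀ g ∈ T.erase q,
            (MvPolynomial.monomial (m - lm mo g) (c' g)) * g =
            (MvPolynomial.monomial (m - lm mo g) (c g)) * g := by
          intro g hg
          rw [hcne g (Finset.ne_of_mem_erase hg)]
        rw [← Finset.add_sum_erase T
            (fun g => (MvPolynomial.monomial (m - lm mo g)) (c g) * g) hqT,
          ← Finset.add_sum_erase T
            (fun g => (MvPolynomial.monomial (m - lm mo g)) (c' g) * g) hqT,
          Finset.sum_congr rfl h1, hcq, map_add, add_mul]
        ring
      have hstd := hspol p hpG q hqG hγd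
      rcases stdrep_bound mo hstd with hS0 | ⟨lam, hlsum, hlb⟩
      · refine ⟨μ', ?_, hμ'b⟩
        rw [hsplit, hS0, mul_zero, zero_add, hμ'sum]
      · -- Spoly ≠ 0 possibility is not needed: handle both cases uniformly
        by_cases hS0 : Spoly mo p q = 0
        · refine ⟨μ', ?_, hμ'b⟩
          rw [hsplit, hS0, mul_zero, zero_add, hμ'sum]
        refine ⟨fun g => MvPolynomial.monomial (m - γ) e * lam g + μ' g, ?_, ?_⟩
        · rw [hsplit, hμ'sum, hlsum, Finset.mul_sum, ← Finset.sum_add_distrib]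
          apply Finset.sum_congr rfl
          intro g hg
          ring
        · intro g hgG hne
          have hAB : (MvPolynomial.monomial (m - γ) e * lam g + μ' g) * g =
              MvPolynomial.monomial (m - γ) e * (lam g * g) + μ' g * g := by ring
          rw [hAB]
          apply lt_of_le_of_lt (lm_add_le mo _ _)
          have h0m : (0 : mo.syn) < mo.toSyn m := by
            apply lt_of_lt_of_le ?z1 ?z2
            case z1 =>
              show (0 : mo.syn) < mo.toSyn γ
              rcases (bot_le : (⊥ : mo.syn) ≤ mo.toSyn γ).lt_or_eq with hb | hb
              · exact hb
              · exfalso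
                -- γ = 0 forces lm p = lm q = 0, but then Spoly has lm ≺ 0, impossible
                have := lm_Spoly_lt mo hp0 hq0 hS0
                rw [← hγ, ← hb] at this
                exact not_lt_bot this
            case z2 => exact mo.toSyn_monotone hγm
          apply max_lt
          · -- the S-polynomial part
            by_cases hz : MvPolynomial.monomial (m - γ) e * (lam g * g) = 0
            · rw [hz, lm_zero, map_zero]
              exact h0m
            · have hmono : (MvPolynomial.monomial (m - γ) e : MvPolynomial σ K) ≠ 0 :=
                fun hmz => hz (by rw [hmz, zero_mul])
              have hlg : lam g * g ≠ 0 := fun hlz => hz (by rw [hlz, mul_zero])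
              have hemono : e ≠ 0 := fun hez =>
                hmono (by rw [hez, map_zero])
              rw [lm_mul mo hmono hlg, lm_monomial mo hemono, map_add]
              have hb1 : mo.toSyn (lm mo (lam g * g)) < mo.toSyn γ :=
                lt_of_le_of_lt (hlb g hgG hlg) (lm_Spoly_lt mo hp0 hq0 hS0)
              calc mo.toSyn (m - γ) + mo.toSyn (lm mo (lam g * g))
                  < mo.toSyn (m - γ) + mo.toSyn γ := by
                    exact add_lt_add_right hb1 _
                _ = mo.toSyn m := by
                    rw [← map_add, tsub_add_cancel_of_le hγm]
          · by_cases hz : μ' g * g = 0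
            · rw [hz, lm_zero, map_zero]
              exact h0m
            · exact hμ'b g hgG hz

lemma main_rep {σ' : Type*} (mo : MonomialOrder σ')
    (hdeg : ∀ a b : σ' →₀ ℕ, Finsupp.degree a < Finsupp.degree b → (a ≺[mo] b))
    (G : Finset (MvPolynomial σ' K)) (d : ℕ)
    (hspol : ∀ p ∈ G, ∀ q ∈ G,
      Finsupp.degree (lm mo p ⊔ lm mo q) ≤ d → HasStdRep mo G (Spoly mo p q)) :
    ∀ δ : mo.syn, ∀ (h : MvPolynomial σ' K) (lam : MvPolynomial σ' K → MvPolynomial σ' K),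
      h = ∑ g ∈ G, lam g * g →
      (∀ g ∈ G, lam g * g ≠ 0 → Finsupp.degree (lm mo (lam g * g)) ≤ d) →
      (∀ g ∈ G, mo.toSyn (lm mo (lam g * g)) ≤ δ) →
      HasStdRep mo G h := by
  intro δ
  induction δ using WellFoundedLT.induction with
  | _ δ IH =>
  intro h lam hrep hinv hbd
  classical
  set δ₀ : mo.syn := G.sup (fun g => mo.toSyn (lm mo (lam g * g))) with hδ₀
  by_cases hle : δ₀ ≤ mo.toSyn (lm mo h)
  · exact Or.inr ⟨lam, hrep, fun g hg _ =>
      le_trans (Finset.le_sup (f := fun g => mo.toSyn (lm mo (lam g * g))) hg) hle⟩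
  push_neg at hle
  have hbot : (0 : mo.syn) < δ₀ := by
    apply lt_of_le_of_lt _ hle
    rw [← MonomialOrder.bot_eq_zero]
    exact bot_le
  set m : σ' →₀ ℕ := mo.toSyn.symm δ₀ with hm
  have hmsyn : mo.toSyn m = δ₀ := mo.toSyn.apply_symm_apply δ₀
  -- G is nonempty and the sup is attained at some nonzero term
  have hGne : G.Nonempty := by
    by_contra hc
    rw [Finset.not_nonempty_iff_eq_empty] at hc
    rw [hδ₀, hc, Finset.sup_empty] at hbot
    exact lt_irrefl _ hbot
  obtain ⟨g₀, hg₀G, hg₀⟩ := Finset.exists_mem_eq_sup G hGne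
    (fun g => mo.toSyn (lm mo (lam g * g)))
  have hg₀ne : lam g₀ * g₀ ≠ 0 := by
    intro hz
    rw [hδ₀, hg₀, hz, lm_zero, map_zero] at hbot
    exact lt_irrefl _ hbot
  have hmd : Finsupp.degree m ≤ d := by
    have : lm mo (lam g₀ * g₀) = m := by
      apply mo.toSyn.injective
      rw [hmsyn, hδ₀, hg₀]
    rw [← this]
    exact hinv g₀ hg₀G hg₀ne
  set T : Finset (MvPolynomial σ' K) :=
    G.filter (fun g => lam g * g ≠ 0 ∧ mo.toSyn (lm mo (lam g * g)) = δ₀) with hT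
  have hTG : T ⊆ G := Finset.filter_subset _ _
  have hTfact : ∀ g ∈ T, lam g ≠ 0 ∧ g ≠ 0 ∧ lm mo (lam g) + lm mo g = m := by
    intro g hg
    rw [hT, Finset.mem_filter] at hg
    obtain ⟨hgG, hne, heq⟩ := hg
    have hl : lam g ≠ 0 := fun hz => hne (by rw [hz, zero_mul])
    have hgz : g ≠ 0 := fun hz => hne (by rw [hz, mul_zero])
    refine ⟨hl, hgz, ?_⟩
    rw [← lm_mul mo hl hgz]
    apply mo.toSyn.injective
    rw [hmsyn, heq]
  -- the leading coefficients in degree δ₀ sum to zero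
  have hcoeffm : MvPolynomial.coeff m h = 0 := by
    apply coeff_eq_zero_of_lm_lt
    rw [hmsyn]
    exact hle
  have hcsum : ∑ g ∈ T, lc mo (lam g) * lc mo g = 0 := by
    have h1 : ∑ g ∈ G, MvPolynomial.coeff m (lam g * g) = 0 := by
      rw [← MvPolynomial.coeff_sum, ← hrep]
      exact hcoeffm
    have h2 : ∑ g ∈ G, MvPolynomial.coeff m (lam g * g)
        = ∑ g ∈ T, MvPolynomial.coeff m (lam g * g) := by
      symm
      apply Finset.sum_subset hTG
      intro g hgG hgT
      rw [hT, Finset.mem_filter] at hgT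
      by_cases hz : lam g * g = 0
      · rw [hz, MvPolynomial.coeff_zero]
      · have hlt : mo.toSyn (lm mo (lam g * g)) < δ₀ := by
          rcases (Finset.le_sup (f := fun g => mo.toSyn (lm mo (lam g * g))) hgG).lt_or_eq
            with hc | hc
          · exact hc
          · exact absurd ⟨hgG, hz, hc⟩ hgT
        apply coeff_eq_zero_of_lm_lt
        rw [hmsyn]
        exact hlt
    have h3 : ∀ g ∈ T, MvPolynomial.coeff m (lam g * g) = lc mo (lam g) * lc mo g := by
      intro g hg
      obtain ⟨hl, hgz, hsum⟩ := hTfact g hg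
      have : lm mo (lam g * g) = m := by rw [lm_mul mo hl hgz, hsum]
      rw [← this, ← lc_mul mo hl hgz]
      rfl
    rw [← Finset.sum_congr rfl h3, ← h2, h1]
  -- apply the syzygy lemma
  obtain ⟨μ, hμsum, hμb⟩ := syzygy_step mo G d hspol T hTG m hmd
    (fun g => lc mo (lam g))
    (fun g hg => ⟨(hTfact g hg).2.1, by
      rw [← (hTfact g hg).2.2]; exact le_add_self⟩)
    hcsum
  -- rewrite the syzygy sum: m - lm g = lm (lam g)
  have hμsum' : ∑ g ∈ T, (MvPolynomial.monomial (lm mo (lam g)) (lc mo (lam g))) * g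
      = ∑ g ∈ G, μ g * g := by
    rw [← hμsum]
    apply Finset.sum_congr rfl
    intro g hg
    obtain ⟨hl, hgz, hsum⟩ := hTfact g hg
    congr 2
    rw [← hsum, add_tsub_cancel_right]
  -- the new representation
  set lam' : MvPolynomial σ' K → MvPolynomial σ' K :=
    fun g => (if g ∈ T then lam g - MvPolynomial.monomial (lm mo (lam g)) (lc mo (lam g))
      else lam g) + μ g with hlam'
  have hrep' : h = ∑ g ∈ G, lam' g * g := by
    have h1 : ∀ g ∈ G, lam' g * g =
        (lam g * g - (if g ∈ T then
          (MvPolynomial.monomial (lm mo (lam g)) (lc mo (lam g))) * g else 0)) + μ g * g := by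
      intro g _
      rw [hlam']
      by_cases hg : g ∈ T
      · simp only [if_pos hg]
        ring
      · simp only [if_neg hg]
        ring
    rw [Finset.sum_congr rfl h1, Finset.sum_add_distrib, Finset.sum_sub_distrib,
      Finset.sum_ite_mem, Finset.inter_eq_right.mpr hTG, ← hμsum', hrep]
    ring
  -- bounds for the new representation
  have hbd' : ∀ g ∈ G, mo.toSyn (lm mo (lam' g * g)) < δ₀ := by
    intro g hgG
    have hsplit : lam' g * g = (if g ∈ T then lam g -
        MvPolynomial.monomial (lm mo (lam g)) (lc mo (lam g)) else lam g) * g + μ g * g := by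
      rw [hlam']; ring
    rw [hsplit]
    apply lt_of_le_of_lt (lm_add_le mo _ _)
    apply max_lt
    · split_ifs with hgT
      · obtain ⟨hl, hgz, hsum⟩ := hTfact g hgT
        by_cases hz : lam g - MvPolynomial.monomial (lm mo (lam g)) (lc mo (lam g)) = 0
        · rw [hz, zero_mul, lm_zero, map_zero]
          exact hbot
        · rcases lm_tail mo hl with ht | ht
          · exact absurd ht hz
          · rw [lm_mul mo hz hgz, map_add]
            calc mo.toSyn (lm mo (lam g - MvPolynomial.monomial (lm mo (lam g)) (lc mo (lam g))))
                  + mo.toSyn (lm mo g)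
                < mo.toSyn (lm mo (lam g)) + mo.toSyn (lm mo g) := add_lt_add_left ht _
              _ = mo.toSyn (lm mo (lam g) + lm mo g) := by rw [map_add]
              _ = δ₀ := by rw [hsum, hmsyn]
      · by_cases hz : lam g * g = 0
        · rw [hz, lm_zero, map_zero]
          exact hbot
        · rcases (Finset.le_sup (f := fun g => mo.toSyn (lm mo (lam g * g))) hgG).lt_or_eq
            with hc | hc
          · exact hc
          · exact absurd (Finset.mem_filter.mpr ⟨hgG, hz, hc⟩) hgT
    · by_cases hz : μ g * g = 0
      · rw [hz, lm_zero, map_zero]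
        exact hbot
      · rw [← hmsyn]
        exact hμb g hgG hz
  -- the new invariant
  have hinv' : ∀ g ∈ G, lam' g * g ≠ 0 → Finsupp.degree (lm mo (lam' g * g)) ≤ d := by
    intro g hgG _
    have h1 : lm mo (lam' g * g) ≼[mo] m := by
      rw [hmsyn]
      exact le_of_lt (hbd' g hgG)
    exact le_trans (degree_le_of_syn_le mo hdeg h1) hmd
  -- recurse
  set δ' : mo.syn := G.sup (fun g => mo.toSyn (lm mo (lam' g * g))) with hδ'
  have hδ₀le : δ₀ ≤ δ := Finset.sup_le hbd
  have hδ'lt : δ' < δ₀ := by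
    apply (Finset.sup_lt_iff (show (⊥ : mo.syn) < δ₀ by
      rw [MonomialOrder.bot_eq_zero]; exact hbot)).mpr
    intro g hg
    exact hbd' g hg
  exact IH δ' (lt_of_lt_of_le hδ'lt hδ₀le) h lam' hrep' hinv'
    (fun g hg => Finset.le_sup (f := fun g => mo.toSyn (lm mo (lam' g * g))) hg)

/-- `d`-Gröbner basis criterion: for a homogeneous ideal `I = ⟨f 0, …, f (mnum-1)⟩`
and a finite set `G ⊆ I` of homogeneous polynomials containing the `f i`, if every
S-polynomial of elements of `G` of degree `≤ d` has a standard representation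
w.r.t. `G`, then every nonzero homogeneous `h ∈ I` of degree `≤ d` has its leading
monomial divisible by the leading monomial of some element of `G`.
The monomial order is assumed to refine the total degree. -/
theorem dGroebner_of_spolys {n mnum : ℕ} (mo : MonomialOrder (Fin n)) {K : Type*} [Field K]
    (hdeg : ∀ a b : Fin n →₀ ℕ, Finsupp.degree a < Finsupp.degree b → (a ≺[mo] b))
    (f : Fin mnum → MvPolynomial (Fin n) K) (df : Fin mnum → ℕ)
    (hf : ∀ i, (f i).IsHomogeneous (df i))
    (G : Finset (MvPolynomial (Fin n) K))
    (hGI : (↑G : Set (MvPolynomial (Fin n) K)) ⊆ Ideal.span (Set.range f))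
    (hfG : ∀ i, f i ∈ G)
    (hGhom : ∀ g ∈ G, ∃ e, g.IsHomogeneous e)
    (d : ℕ)
    (hspol : ∀ p ∈ G, ∀ q ∈ G,
      Finsupp.degree (lm mo p ⊔ lm mo q) ≤ d → HasStdRep mo G (Spoly mo p q)) :
    ∀ (h : MvPolynomial (Fin n) K) (e : ℕ), h ∈ Ideal.span (Set.range f) → h ≠ 0 →
      h.IsHomogeneous e → e ≤ d → ∃ g ∈ G, g ≠ 0 ∧ lm mo g ≤ lm mo h := by
  intro h e hmem hne hhom hed
  classical
  obtain ⟨c, hc⟩ := (Submodule.mem_span_range_iff_exists_fun _).mp hmem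
  set c' : Fin mnum → MvPolynomial (Fin n) K :=
    fun i => if df i ≤ e then homogeneousComponent (e - df i) (c i) else 0 with hc'
  have hci : ∀ i, homogeneousComponent e (c i * f i) = c' i * f i := by
    intro i
    rw [homComp_mul_right (hf i) (c i) e]
    simp only [hc']
    split_ifs with hi
    · rfl
    · rw [zero_mul]
  have h0 : homogeneousComponent e h = h := by
    rw [homogeneousComponent_of_mem hhom, if_pos rfl]
  have hrep0 : h = ∑ i, c' i * f i := by
    conv_lhs => rw [← h0, ← hc]
    rw [map_sum]
    apply Finset.sum_congr rfl
    intro i _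
    rw [smul_eq_mul, hci i]
  set lam : MvPolynomial (Fin n) K → MvPolynomial (Fin n) K :=
    fun g => ∑ i ∈ Finset.univ.filter (fun i => f i = g), c' i with hlam
  have hgsum : ∀ g, lam g * g = ∑ i ∈ Finset.univ.filter (fun i => f i = g), c' i * f i := by
    intro g
    rw [hlam, Finset.sum_mul]
    apply Finset.sum_congr rfl
    intro i hi
    rw [(Finset.mem_filter.mp hi).2]
  have hrep : h = ∑ g ∈ G, lam g * g := by
    rw [hrep0, Finset.sum_congr rfl (fun g _ => hgsum g)]
    exact (Finset.sum_fiberwise_of_maps_to (fun i _ => hfG i) (fun i => c' i * f i)).symm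
  have hhom_term : ∀ g, (lam g * g).IsHomogeneous e := by
    intro g
    rw [hgsum g]
    apply MvPolynomial.IsHomogeneous.sum
    intro i _
    simp only [hc']
    split_ifs with hi
    · have h1 := homogeneousComponent_isHomogeneous (e - df i) (c i)
      have h2 := h1.mul (hf i)
      rwa [Nat.sub_add_cancel hi] at h2
    · rw [zero_mul]
      exact isHomogeneous_zero _ _ _
  have hinv : ∀ g ∈ G, lam g * g ≠ 0 → Finsupp.degree (lm mo (lam g * g)) ≤ d := by
    intro g _ hz
    have := isHomogeneous_degree_eq (hhom_term g) (lm_mem mo hz)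
    rw [this]
    exact hed
  have hstd := main_rep mo hdeg G d hspol
    (G.sup fun g => mo.toSyn (lm mo (lam g * g))) h lam hrep hinv
    (fun g hg => Finset.le_sup (f := fun g => mo.toSyn (lm mo (lam g * g))) hg)
  rcases hstd with h00 | ⟨lam2, hrep2, hb2⟩
  · exact absurd h00 hne
  · have hch : MvPolynomial.coeff (lm mo h) h ≠ 0 := lc_ne_zero mo hne
    have hsum_ne : ∑ g ∈ G, MvPolynomial.coeff (lm mo h) (lam2 g * g) ≠ 0 := by
      rw [← MvPolynomial.coeff_sum, ← hrep2]
      exact hch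
    obtain ⟨g, hgG, hgne⟩ := Finset.exists_ne_zero_of_sum_ne_zero hsum_ne
    have hz : lam2 g * g ≠ 0 := fun hzz => hgne (by rw [hzz, MvPolynomial.coeff_zero])
    have hmem' : lm mo h ∈ (lam2 g * g).support := MvPolynomial.mem_support_iff.mpr hgne
    have h1 : mo.toSyn (lm mo h) ≤ mo.toSyn (lm mo (lam2 g * g)) := le_lm mo hmem'
    have h2 := hb2 g hgG hz
    have heq : lm mo (lam2 g * g) = lm mo h := mo.toSyn.injective (le_antisymm h2 h1)
    have hl2 : lam2 g ≠ 0 := fun hzz => hz (by rw [hzz, zero_mul])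
    have hg0 : g ≠ 0 := fun hzz => hz (by rw [hzz, mul_zero])
    refine ⟨g, hgG, hg0, ?_⟩
    rw [← heq, lm_mul mo hl2 hg0]
    exact le_add_self
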